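/- Let A, B, C, D ∈ ℝ² be four points in convex position (in cyclic order) determining at most three distinct angle values in (0,π), with interior angles in cyclic order γ, γ, β, β where γ > β and γ ≠ π/2. Then β = 2π/5, γ = 3π/5, and the segments DA, AB, BC all have equal length; i.e., ABCD consists of four vertices of a regular pentagon. -/

import Mathlib

open EuclideanGeometry

noncomputable section

abbrev Pt : Type := EuclideanSpace ℝ (Fin 2)

/-- The point (x, y) in the Euclidean plane. -/
def pt (x y : ℝ) : Pt := (WithLp.equiv 2 (Fin 2 → ℝ)).symm ![x, y]

/-- The set of distinct angle values in (0, π) determined by a planar point set. -/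
def angleSet (P : Set Pt) : Set ℝ :=
  {θ : ℝ | θ ∈ Set.Ioo 0 Real.pi ∧
    ∃ x ∈ P, ∃ y ∈ P, ∃ z ∈ P, x ≠ y ∧ y ≠ z ∧ x ≠ z ∧ ∠ x y z = θ}


/-- A convex quadrilateral with vertices in cyclic order: the open diagonals meet and
no three consecutive vertices are collinear. -/
def ConvexQuad (A B C D : Pt) : Prop :=
  (∃ x, x ∈ openSegment ℝ A C ∧ x ∈ openSegment ℝ B D) ∧
  ¬ Collinear ℝ ({A, B, C} : Set Pt) ∧ ¬ Collinear ℝ ({B, C, D} : Set Pt) ∧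
  ¬ Collinear ℝ ({C, D, A} : Set Pt) ∧ ¬ Collinear ℝ ({D, A, B} : Set Pt)

lemma ncol_ne {p q r : Pt} (h : ¬Collinear ℝ ({p, q, r} : Set Pt)) :
    p ≠ q ∧ p ≠ r ∧ q ≠ r := by
  refine ⟨?_, ?_, ?_⟩ <;> rintro rfl <;> apply h
  · exact Collinear.subset (by intro z hz; simp at hz ⊢; tauto) (collinear_pair ℝ p r)
  · exact Collinear.subset (by intro z hz; simp at hz ⊢; tauto) (collinear_pair ℝ p q)
  · exact Collinear.subset (by intro z hz; simp at hz ⊢; tauto) (collinear_pair ℝ p q)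

lemma ncol_perm {p q r p' q' r' : Pt} (h : ¬Collinear ℝ ({p, q, r} : Set Pt))
    (hs : ({p', q', r'} : Set Pt) = {p, q, r}) : ¬Collinear ℝ ({p', q', r'} : Set Pt) := by
  rw [hs]; exact h

lemma four_le_ncard {S : Set ℝ} (hfin : S.Finite) {p q u v : ℝ}
    (hp : p ∈ S) (hq : q ∈ S) (hu : u ∈ S) (hv : v ∈ S)
    (h1 : p ≠ q) (h2 : p ≠ u) (h3 : p ≠ v) (h4 : q ≠ u) (h5 : q ≠ v) (h6 : u ≠ v) :
    4 ≤ S.ncard := by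
  have hsub : ({p, q, u, v} : Set ℝ) ⊆ S := by
    intro z hz; simp only [Set.mem_insert_iff, Set.mem_singleton_iff] at hz
    rcases hz with rfl | rfl | rfl | rfl <;> assumption
  have hcard : ({p, q, u, v} : Set ℝ).ncard = 4 := by
    rw [Set.ncard_insert_of_notMem (by simp [h1, h2, h3]),
        Set.ncard_insert_of_notMem (by simp [h4, h5]),
        Set.ncard_insert_of_notMem (by simp [h6]), Set.ncard_singleton]
  calc 4 = ({p, q, u, v} : Set ℝ).ncard := hcard.symm
    _ ≤ S.ncard := Set.ncard_le_ncard hsub hfin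

set_option maxHeartbeats 1600000 in
theorem stmt6 (A B C D : Pt) (γ β : ℝ) (hq : ConvexQuad A B C D)
    (hA : ∠ D A B = γ) (hB : ∠ A B C = γ) (hC : ∠ B C D = β) (hD : ∠ C D A = β)
    (hgb : β < γ) (hg : γ ≠ Real.pi / 2)
    (hcount : (angleSet {A, B, C, D}).ncard ≤ 3) :
    β = 2 * Real.pi / 5 ∧ γ = 3 * Real.pi / 5 ∧
    dist D A = dist A B ∧ dist A B = dist B C := by
  obtain ⟨⟨X, hXAC, hXBD⟩, hABC, hBCD, hCDA, hDAB⟩ := hq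
  -- point distinctness
  obtain ⟨hAB, hAC, hBC⟩ := ncol_ne hABC
  obtain ⟨hBD, hCD⟩ := (ncol_ne hBCD).2
  have hDA : D ≠ A := (ncol_ne hCDA).2.2
  have hAD : A ≠ D := hDA.symm
  -- X distinct from the vertices
  have hXA : X ≠ A := by
    rintro rfl; exact hAC (left_mem_openSegment_iff.1 hXAC)
  have hXC : X ≠ C := fun h => hAC (right_mem_openSegment_iff.1 (h ▸ hXAC))
  have hXB : X ≠ B := by
    rintro rfl; exact hBD (left_mem_openSegment_iff.1 hXBD)
  have hXD : X ≠ D := fun h => hBD (right_mem_openSegment_iff.1 (h ▸ hXBD))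
  have hsAC : Sbtw ℝ A X C :=
    ⟨mem_segment_iff_wbtw.1 (openSegment_subset_segment ℝ A C hXAC), hXA, hXC⟩
  have hsBD : Sbtw ℝ B X D :=
    ⟨mem_segment_iff_wbtw.1 (openSegment_subset_segment ℝ B D hXBD), hXB, hXD⟩
  have hAXC : ∠ A X C = Real.pi := hsAC.angle₁₂₃_eq_pi
  have hBXD : ∠ B X D = Real.pi := hsBD.angle₁₂₃_eq_pi
  have hCXA : ∠ C X A = Real.pi := by rw [angle_comm]; exact hAXC
  have hDXB : ∠ D X B = Real.pi := by rw [angle_comm]; exact hBXD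
  -- ray substitutions
  have rB : ∠ A B X = ∠ A B D := angle_eq_angle_of_angle_eq_pi A hBXD
  have rB' : ∠ C B X = ∠ C B D := angle_eq_angle_of_angle_eq_pi C hBXD
  have rA : ∠ B A X = ∠ B A C := angle_eq_angle_of_angle_eq_pi B hAXC
  have rA' : ∠ D A X = ∠ D A C := angle_eq_angle_of_angle_eq_pi D hAXC
  have rC : ∠ B C X = ∠ B C A := angle_eq_angle_of_angle_eq_pi B hCXA
  have rC' : ∠ D C X = ∠ D C A := angle_eq_angle_of_angle_eq_pi D hCXA
  have rD : ∠ C D X = ∠ C D B := angle_eq_angle_of_angle_eq_pi C hDXB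
  have rD' : ∠ A D X = ∠ A D B := angle_eq_angle_of_angle_eq_pi A hDXB
  -- small triangle sums
  have E1 : ∠ A B D + ∠ B X A + ∠ B A C = Real.pi := by
    have t := angle_add_angle_add_angle_eq_pi (p₁ := A) (p₂ := B) (p₃ := X) hAB.symm
    rwa [rB, angle_comm X A B, rA] at t
  have E2 : ∠ C B D + ∠ B X C + ∠ B C A = Real.pi := by
    have t := angle_add_angle_add_angle_eq_pi (p₁ := C) (p₂ := B) (p₃ := X) hBC
    rwa [rB', angle_comm X C B, rC] at t
  have E3 : ∠ C D B + ∠ D X C + ∠ A C D = Real.pi := by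
    have t := angle_add_angle_add_angle_eq_pi (p₁ := C) (p₂ := D) (p₃ := X) hCD.symm
    rwa [rD, angle_comm X C D, rC', angle_comm D C A] at t
  have E4 : ∠ A D B + ∠ D X A + ∠ D A C = Real.pi := by
    have t := angle_add_angle_add_angle_eq_pi (p₁ := A) (p₂ := D) (p₃ := X) hAD.symm
    rwa [rD', angle_comm X A D, rA'] at t
  -- straight-line relations at X
  have L1 : ∠ B X A + ∠ B X C = Real.pi := angle_add_angle_eq_pi_of_angle_eq_pi B hAXC
  have L2 : ∠ B X C + ∠ D X C = Real.pi := by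
    have t := angle_add_angle_eq_pi_of_angle_eq_pi C hBXD
    rwa [angle_comm C X B, angle_comm C X D] at t
  have L3 : ∠ D X A + ∠ D X C = Real.pi := angle_add_angle_eq_pi_of_angle_eq_pi D hAXC
  -- big triangle sums
  have T5 : ∠ A B D + ∠ B D A + γ = Real.pi := by
    have t := angle_add_angle_add_angle_eq_pi (p₁ := A) (p₂ := B) (p₃ := D) hAB.symm
    rwa [hA] at t
  have T6 : ∠ B C A + ∠ C A B + γ = Real.pi := by
    have t := angle_add_angle_add_angle_eq_pi (p₁ := B) (p₂ := C) (p₃ := A) hBC.symm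
    rwa [hB] at t
  have T7 : ∠ C D B + ∠ D B C + β = Real.pi := by
    have t := angle_add_angle_add_angle_eq_pi (p₁ := C) (p₂ := D) (p₃ := B) hCD.symm
    rwa [hC] at t
  have T8 : ∠ A C D + ∠ C D A + ∠ D A C = Real.pi := by
    exact angle_add_angle_add_angle_eq_pi (p₁ := A) (p₂ := C) (p₃ := D) hAC.symm
  have cCAB : ∠ C A B = ∠ B A C := angle_comm C A B
  have cDBC : ∠ D B C = ∠ C B D := angle_comm D B C
  have cADB : ∠ A D B = ∠ B D A := angle_comm A D B
  rw [hD] at T8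
  -- positivity and upper bounds of sub-angles
  have pa1 : 0 < ∠ B A C := angle_pos_of_not_collinear (ncol_perm hABC (by ext z; simp; tauto))
  have la1 : ∠ B A C < Real.pi :=
    angle_lt_pi_of_not_collinear (ncol_perm hABC (by ext z; simp; tauto))
  have pa2 : 0 < ∠ D A C := angle_pos_of_not_collinear (ncol_perm hCDA (by ext z; simp; tauto))
  have la2 : ∠ D A C < Real.pi :=
    angle_lt_pi_of_not_collinear (ncol_perm hCDA (by ext z; simp; tauto))
  have pb1 : 0 < ∠ A B D := angle_pos_of_not_collinear (ncol_perm hDAB (by ext z; simp; tauto))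
  have lb1 : ∠ A B D < Real.pi :=
    angle_lt_pi_of_not_collinear (ncol_perm hDAB (by ext z; simp; tauto))
  have pb2 : 0 < ∠ C B D := angle_pos_of_not_collinear (ncol_perm hBCD (by ext z; simp; tauto))
  have pc1 : 0 < ∠ B C A := angle_pos_of_not_collinear (ncol_perm hABC (by ext z; simp; tauto))
  have pc2 : 0 < ∠ A C D := angle_pos_of_not_collinear (ncol_perm hCDA (by ext z; simp; tauto))
  have pd1 : 0 < ∠ C D B := angle_pos_of_not_collinear (ncol_perm hBCD (by ext z; simp; tauto))
  have pd2 : 0 < ∠ B D A := angle_pos_of_not_collinear (ncol_perm hDAB (by ext z; simp; tauto))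
  have ld2 : ∠ B D A < Real.pi :=
    angle_lt_pi_of_not_collinear (ncol_perm hDAB (by ext z; simp; tauto))
  have pγ : 0 < γ := by rw [← hA]; exact angle_pos_of_not_collinear hDAB
  have lγ : γ < Real.pi := by rw [← hA]; exact angle_lt_pi_of_not_collinear hDAB
  have pβ : 0 < β := by rw [← hC]; exact angle_pos_of_not_collinear hBCD
  have lβ : β < Real.pi := by rw [← hC]; exact angle_lt_pi_of_not_collinear hBCD
  -- angle sum of the quadrilateral
  have hsum : γ + β = Real.pi := by linarith
  -- the angle set
  set S := angleSet {A, B, C, D} with hS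
  have hfin : S.Finite := by
    have h4 : ({A, B, C, D} : Set Pt).Finite := Set.toFinite _
    apply Set.Finite.subset (Set.Finite.image
      (f := fun t : Pt × Pt × Pt => ∠ t.1 t.2.1 t.2.2) (h4.prod (h4.prod h4)))
    rintro θ ⟨-, x, hx, y, hy, z, hz, -, -, -, rfl⟩
    exact ⟨(x, y, z), ⟨hx, hy, hz⟩, rfl⟩
  have memS : ∀ x y z : Pt, x ∈ ({A, B, C, D} : Set Pt) → y ∈ ({A, B, C, D} : Set Pt) →
      z ∈ ({A, B, C, D} : Set Pt) → x ≠ y → y ≠ z → x ≠ z →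
      0 < ∠ x y z → ∠ x y z < Real.pi → ∠ x y z ∈ S := by
    intro x y z hx hy hz h1 h2 h3 h4 h5
    exact ⟨⟨h4, h5⟩, x, hx, y, hy, z, hz, h1, h2, h3, rfl⟩
  have hγS : γ ∈ S := by
    rw [← hA]
    exact memS D A B (by simp) (by simp) (by simp) hDA hAB hBD.symm
      (angle_pos_of_not_collinear hDAB) (angle_lt_pi_of_not_collinear hDAB)
  have hβS : β ∈ S := by
    rw [← hC]
    exact memS B C D (by simp) (by simp) (by simp) hBC hCD hBD
      (angle_pos_of_not_collinear hBCD) (angle_lt_pi_of_not_collinear hBCD)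
  have hb1S : ∠ A B D ∈ S := memS A B D (by simp) (by simp) (by simp) hAB hBD hAD pb1 lb1
  have ha1S : ∠ B A C ∈ S := memS B A C (by simp) (by simp) (by simp) hAB.symm hAC hBC pa1 la1
  have hd2S : ∠ B D A ∈ S := memS B D A (by simp) (by simp) (by simp) hBD hDA hAB.symm pd2 ld2
  have ha2S : ∠ D A C ∈ S := memS D A C (by simp) (by simp) (by simp) hDA hAC hCD.symm pa2 la2
  have hb1β : ∠ A B D < β := by linarith
  have ha1β : ∠ B A C < β := by linarith
  have hd2β : ∠ B D A < β := by linarith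
  have key : ∀ u v : ℝ, u ∈ S → v ∈ S → u < β → v < β → u = v := by
    intro u v hu hv hub hvb
    by_contra hne
    have h4 := four_le_ncard hfin hγS hβS hu hv (ne_of_gt hgb)
      (ne_of_gt (by linarith : u < γ)) (ne_of_gt (by linarith : v < γ))
      (ne_of_gt hub) (ne_of_gt hvb) hne
    omega
  have e_ab : ∠ B A C = ∠ A B D := key _ _ ha1S hb1S ha1β hb1β
  have e_db : ∠ B D A = ∠ A B D := key _ _ hd2S hb1S hd2β hb1β
  have hβ2 : β = 2 * ∠ A B D := by linarith
  have hd1b1 : ∠ C D B = ∠ A B D := by linarith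
  have hc2a1 : ∠ A C D = ∠ B A C := by linarith
  have ha2γ : ∠ D A C < γ := by linarith
  have ha2 : ∠ D A C = β := by
    by_contra hne
    have hab1 : ∠ D A C ≠ ∠ A B D := by
      intro h
      have : γ = β := by linarith
      linarith
    have h4 := four_le_ncard hfin hγS hβS hb1S ha2S (ne_of_gt hgb)
      (ne_of_gt (by linarith : ∠ A B D < γ)) (ne_of_gt ha2γ)
      (ne_of_gt hb1β) (fun h => hne h.symm) (fun h => hab1 h.symm)
    omega
  have hb1 : ∠ A B D = Real.pi / 5 := by linarith
  refine ⟨by linarith, by linarith, ?_, ?_⟩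
  · have h := dist_eq_of_angle_eq_angle_of_angle_ne_pi (p₁ := A) (p₂ := D) (p₃ := B)
      (by linarith) (by rw [hA]; intro h; linarith)
    rw [dist_comm D A]; exact h
  · have h := dist_eq_of_angle_eq_angle_of_angle_ne_pi (p₁ := B) (p₂ := A) (p₃ := C)
      (by linarith) (by rw [hB]; intro h; linarith)
    rw [dist_comm A B]; exact h
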